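/- Let r > 2, s = r+1, and 2r+1 < m < 3r+1. In the {r,r+1}-leaper graph on an m×n board with n ≥ 2s, the vertex (r, r+1) is adjacent to the three vertices (0,0), (2r,0), and (2r+1,1), each of which has degree 2 with (r,r+1) as a forced neighbor; consequently no Hamiltonian circuit exists, since a Hamiltonian circuit would need to use three edges incident to (r,r+1). -/

import Mathlib

/-- The `{r,s}`-leaper graph on an `m × n` board: vertices are the cells
`(x,y)` with `0 ≤ x < m`, `0 ≤ y < n`, and two cells are adjacent when
their absolute coordinate differences are `{r, s}`. -/
def leaperGraph (r s m n : ℕ) : SimpleGraph (Fin m × Fin n) :=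
  SimpleGraph.fromRel fun p q =>
    (Nat.dist p.1.val q.1.val = r ∧ Nat.dist p.2.val q.2.val = s) ∨
    (Nat.dist p.1.val q.1.val = s ∧ Nat.dist p.2.val q.2.val = r)

/-- A graph has a Hamiltonian circuit. -/
def HasHamCycle {V : Type*} [DecidableEq V] (G : SimpleGraph V) : Prop :=
  ∃ (v : V) (w : G.Walk v v), w.IsHamiltonianCycle


open SimpleGraph Walk

variable {V : Type*} {G : SimpleGraph V}

lemma support_getElem_eq_getVert {u v : V} (p : G.Walk u v) (i : ℕ)
    (h : i < p.support.length) : p.support[i] = p.getVert i := by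
  induction p generalizing i with
  | nil => simp_all [Walk.support, Walk.getVert]
  | cons ha q ih =>
    cases i with
    | zero => simp
    | succ k =>
      simp only [Walk.support_cons, Walk.getVert_cons_succ]
      rw [List.getElem_cons_succ]
      exact ih k (by simpa [Walk.length_support] using h)

lemma cycle_getVert_injOn {v : V} {c : G.Walk v v} (hc : c.IsCycle) {i j : ℕ}
    (hi1 : 1 ≤ i) (hi2 : i ≤ c.length) (hj1 : 1 ≤ j) (hj2 : j ≤ c.length)
    (h : c.getVert i = c.getVert j) : i = j := by
  have hnd : c.support.tail.Nodup := hc.2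
  have hlen : c.support.length = c.length + 1 := Walk.length_support c
  have htl : c.support.tail.length = c.length := by
    rw [List.length_tail, hlen]; omega
  have hgi : c.support.tail[i-1]'(by omega) = c.getVert i := by
    rw [List.getElem_tail]
    rw [support_getElem_eq_getVert c _ (by omega)]
    congr 1; omega
  have hgj : c.support.tail[j-1]'(by omega) = c.getVert j := by
    rw [List.getElem_tail]
    rw [support_getElem_eq_getVert c _ (by omega)]
    congr 1; omega
  have := (hnd.getElem_inj_iff (i := i - 1) (j := j - 1)
      (hi := by rw [htl]; omega) (hj := by rw [htl]; omega)).mp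
    (by rw [hgi, hgj]; exact h)
  omega

lemma cycle_neighborSet_start {v : V} {c : G.Walk v v} (hc : c.IsCycle) :
    c.toSubgraph.neighborSet v = {c.getVert 1, c.getVert (c.length - 1)} := by
  have h3 : 3 ≤ c.length := hc.three_le_length
  ext y
  simp only [SimpleGraph.Subgraph.mem_neighborSet, Set.mem_insert_iff, Set.mem_singleton_iff]
  constructor
  · intro hadj
    obtain ⟨i, hi, hilen⟩ := (Walk.toSubgraph_adj_iff c).mp hadj
    rw [Sym2.eq_iff] at hi
    rcases hi with ⟨h1, h2⟩ | ⟨h1, h2⟩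
    · -- getVert i = v, getVert (i+1) = y
      have hi0 : i = 0 := by
        by_contra h0
        have : i = c.length := cycle_getVert_injOn hc (by omega) (by omega) (by omega) le_rfl
          (by rw [h1, Walk.getVert_length])
        omega
      left; rw [← h2, hi0]
    · -- getVert i = y, getVert (i+1) = v
      have : i + 1 = c.length := cycle_getVert_injOn hc (by omega) (by omega) (by omega) le_rfl
        (by rw [h2, Walk.getVert_length])
      right; rw [← h1]; congr 1; omega
  · rintro (rfl | rfl)
    · have := Walk.toSubgraph_adj_getVert c (i := 0) (by omega)
      simpa using this
    · have := Walk.toSubgraph_adj_getVert c (i := c.length - 1) (by omega)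
      have he : c.length - 1 + 1 = c.length := by omega
      rw [he, Walk.getVert_length] at this
      exact this.symm

lemma cycle_neighborSet_pair [DecidableEq V] {v : V} {c : G.Walk v v} (hc : c.IsCycle)
    {u : V} (hu : u ∈ c.support) :
    ∃ x y : V, x ≠ y ∧ c.toSubgraph.neighborSet u = {x, y} := by
  have hrot := hc.rotate hu
  have h3 : 3 ≤ (c.rotate u hu).length := hrot.three_le_length
  refine ⟨(c.rotate u hu).getVert 1, (c.rotate u hu).getVert ((c.rotate u hu).length - 1), ?_, ?_⟩
  · intro h
    have := cycle_getVert_injOn hrot (by omega) (by omega) (by omega) (by omega) h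
    omega
  · rw [← Walk.toSubgraph_rotate c hu]
    exact cycle_neighborSet_start hrot

lemma three_in_pair {α : Sort*} {a b c x y : α}
    (ha : a = x ∨ a = y) (hb : b = x ∨ b = y) (hc : c = x ∨ c = y)
    (hab : a ≠ b) (hac : a ≠ c) (hbc : b ≠ c) : False := by
  rcases ha with rfl | rfl <;> rcases hb with rfl | rfl <;> rcases hc with rfl | rfl <;> simp_all

lemma leaper_adj {r s m n : ℕ} {p q : Fin m × Fin n} :
    (leaperGraph r s m n).Adj p q ↔ p ≠ q ∧
      ((Nat.dist p.1.val q.1.val = r ∧ Nat.dist p.2.val q.2.val = s) ∨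
       (Nat.dist p.1.val q.1.val = s ∧ Nat.dist p.2.val q.2.val = r)) := by
  show (SimpleGraph.fromRel _).Adj p q ↔ _
  rw [SimpleGraph.fromRel_adj]
  rw [Nat.dist_comm q.1.val p.1.val, Nat.dist_comm q.2.val p.2.val]
  tauto

/-- The "snag" at `(r, r+1)`: for `r > 2`, `2r+1 < m < 3r+1`, `n ≥ 2(r+1)`,
the vertex `(r, r+1)` is adjacent to `(0,0)`, `(2r,0)` and `(2r+1,1)`, each of
which has degree 2 (so each forces its edge to `(r,r+1)` into any Hamiltonian
circuit); hence no Hamiltonian circuit exists. -/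
theorem leaper_snag_no_hamCycle
    (r m n : ℕ) (hr : 2 < r) (hm1 : 2 * r + 1 < m) (hm2 : m < 3 * r + 1)
    (hn : 2 * (r + 1) ≤ n) :
    let G := leaperGraph r (r + 1) m n
    let v : Fin m × Fin n := (⟨r, by omega⟩, ⟨r + 1, by omega⟩)
    let a : Fin m × Fin n := (⟨0, by omega⟩, ⟨0, by omega⟩)
    let b : Fin m × Fin n := (⟨2 * r, by omega⟩, ⟨0, by omega⟩)
    let c : Fin m × Fin n := (⟨2 * r + 1, by omega⟩, ⟨1, by omega⟩)
    G.Adj v a ∧ G.Adj v b ∧ G.Adj v c ∧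
      (G.neighborSet a).ncard = 2 ∧ (G.neighborSet b).ncard = 2 ∧
      (G.neighborSet c).ncard = 2 ∧ ¬ HasHamCycle G := by
  intro G v a b c
  have hnm : r + 1 < m := by omega
  have hnn1 : r + 2 < n := by omega
  have hnn2 : r < n := by omega
  have hnm2 : r - 1 < m := by omega
  set a' : Fin m × Fin n := (⟨r + 1, hnm⟩, ⟨r, hnn2⟩) with ha'def
  set b' : Fin m × Fin n := (⟨r - 1, hnm2⟩, ⟨r, hnn2⟩) with hb'def
  set c' : Fin m × Fin n := (⟨r + 1, hnm⟩, ⟨r + 2, hnn1⟩) with hc'def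
  have hva : G.Adj v a := by
    refine leaper_adj.mpr ⟨?_, Or.inl ⟨?_, ?_⟩⟩ <;>
      simp [v, a, Prod.ext_iff, Fin.ext_iff, Nat.dist] <;> omega
  have hvb : G.Adj v b := by
    refine leaper_adj.mpr ⟨?_, Or.inl ⟨?_, ?_⟩⟩ <;>
      simp [v, b, Prod.ext_iff, Fin.ext_iff, Nat.dist] <;> omega
  have hvc : G.Adj v c := by
    refine leaper_adj.mpr ⟨?_, Or.inr ⟨?_, ?_⟩⟩ <;>
      simp [v, c, Prod.ext_iff, Fin.ext_iff, Nat.dist] <;> omega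
  have hNa : G.neighborSet a = {v, a'} := by
    ext u
    have h1 := u.1.isLt
    have h2 := u.2.isLt
    simp only [SimpleGraph.mem_neighborSet, G, leaper_adj, Set.mem_insert_iff,
      Set.mem_singleton_iff, Prod.ext_iff, Fin.ext_iff, Nat.dist, ne_eq, not_and, a, v, a']
    omega
  have hNb : G.neighborSet b = {v, b'} := by
    ext u
    have h1 := u.1.isLt
    have h2 := u.2.isLt
    simp only [SimpleGraph.mem_neighborSet, G, leaper_adj, Set.mem_insert_iff,
      Set.mem_singleton_iff, Prod.ext_iff, Fin.ext_iff, Nat.dist, ne_eq, not_and, b, v, b']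
    omega
  have hNc : G.neighborSet c = {v, c'} := by
    ext u
    have h1 := u.1.isLt
    have h2 := u.2.isLt
    simp only [SimpleGraph.mem_neighborSet, G, leaper_adj, Set.mem_insert_iff,
      Set.mem_singleton_iff, Prod.ext_iff, Fin.ext_iff, Nat.dist, ne_eq, not_and, c, v, c']
    omega
  have hvna : v ≠ a' := by simp [v, a', Prod.ext_iff, Fin.ext_iff]; try omega
  have hvnb : v ≠ b' := by simp [v, b', Prod.ext_iff, Fin.ext_iff]; try omega
  have hvnc : v ≠ c' := by simp [v, c', Prod.ext_iff, Fin.ext_iff]; try omega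
  refine ⟨hva, hvb, hvc, ?_, ?_, ?_, ?_⟩
  · rw [hNa, Set.ncard_pair hvna]
  · rw [hNb, Set.ncard_pair hvnb]
  · rw [hNc, Set.ncard_pair hvnc]
  · rintro ⟨v0, w, hw⟩
    have hcyc := hw.isCycle
    have key : ∀ u u' : Fin m × Fin n, G.neighborSet u = {v, u'} → v ≠ u' →
        w.toSubgraph.Adj u v := by
      intro u u' hNu hvu'
      obtain ⟨x, y, hxy, hset⟩ := cycle_neighborSet_pair hcyc (hw.mem_support u)
      have hsub : w.toSubgraph.neighborSet u ⊆ G.neighborSet u :=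
        SimpleGraph.Subgraph.neighborSet_subset w.toSubgraph u
      rw [hset, hNu] at hsub
      have hx : x = v ∨ x = u' := by simpa using hsub (by simp)
      have hy : y = v ∨ y = u' := by simpa using hsub (by simp)
      have hv : v = x ∨ v = y := by
        rcases hx with rfl | rfl
        · exact Or.inl rfl
        · rcases hy with rfl | rfl
          · exact Or.inr rfl
          · exact absurd rfl hxy
      have : v ∈ w.toSubgraph.neighborSet u := by
        rw [hset]
        rcases hv with rfl | rfl <;> simp
      exact this
    have hwa := key a a' hNa hvna
    have hwb := key b b' hNb hvnb
    have hwc := key c c' hNc hvnc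
    obtain ⟨x, y, hxy, hset⟩ := cycle_neighborSet_pair hcyc (hw.mem_support v)
    have hma : a = x ∨ a = y := by
      have : a ∈ w.toSubgraph.neighborSet v := hwa.symm
      rw [hset] at this; simpa using this
    have hmb : b = x ∨ b = y := by
      have : b ∈ w.toSubgraph.neighborSet v := hwb.symm
      rw [hset] at this; simpa using this
    have hmc : c = x ∨ c = y := by
      have : c ∈ w.toSubgraph.neighborSet v := hwc.symm
      rw [hset] at this; simpa using this
    exact three_in_pair hma hmb hmc
      (by simp [a, b, Prod.ext_iff, Fin.ext_iff]; try omega)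
      (by simp [a, c, Prod.ext_iff, Fin.ext_iff]; try omega)
      (by simp [b, c, Prod.ext_iff, Fin.ext_iff]; try omega)
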